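/- If U''(s) > 0 for every s ∈ ℝ, then for every x ∈ ℝ^{2d}, the linear span of the vectors {𝒰₀(x), 𝒰₁(x), …, 𝒰_{2d−3}(x), e_{u_d}, [e_{u_d}, 𝒱](x)} equals ℝ^{2d}; in particular every standard basis vector e_{z_i}, e_{u_i} (1 ≤ i ≤ d) lies in this span. -/

import Mathlib

open scoped BigOperators

noncomputable section

abbrev E (d : ℕ) : Type := (Fin d → ℝ) × (Fin d → ℝ)

def ez (d : ℕ) (i : Fin d) : E d := (Pi.single i 1, 0)

def eu (d : ℕ) (i : Fin d) : E d := (0, Pi.single i 1)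

noncomputable def ham (d : ℕ) (V U : ℝ → ℝ) (x : E d) : ℝ :=
  (∑ i : Fin d, ((x.2 i) ^ 2 / 2 + V (x.1 i))) +
    ∑ i : Fin (d - 1),
      U (x.1 ⟨i.1 + 1, by have := i.2; omega⟩ - x.1 ⟨i.1, by have := i.2; omega⟩)

noncomputable def drift (d : ℕ) (γ₁ γd : ℝ) (V U : ℝ → ℝ) (x : E d) : E d :=
  (x.2, fun i =>
    -(fderiv ℝ (ham d V U) x (ez d i)) -
      (if i.1 = 0 then γ₁ * x.2 i else 0) -
      (if i.1 = d - 1 then γd * x.2 i else 0))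

noncomputable def lie (d : ℕ) (X Y : E d → E d) (x : E d) : E d :=
  fderiv ℝ Y x (X x) - fderiv ℝ X x (Y x)

noncomputable def UU (d : ℕ) (b : E d → E d) (v : E d) : ℕ → E d → E d
  | 0 => fun _ => v
  | n + 1 => lie d (UU d b v n) b

namespace S16

lemma le1 : (1 : WithTop ℕ∞) ≤ ((⊤:ℕ∞) : WithTop ℕ∞) := by
  exact_mod_cast (le_top : (1:ℕ∞) ≤ ⊤)

lemma leD : ((⊤:ℕ∞) : WithTop ℕ∞) + 1 ≤ ((⊤:ℕ∞):WithTop ℕ∞) := by norm_cast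

/-- projection as a CLM -/
def pr (d : ℕ) (i : Fin d) : (Fin d → ℝ) →L[ℝ] ℝ := ContinuousLinearMap.proj i

def i0 (d : ℕ) (m : Fin (d-1)) : Fin d := ⟨m.1, by have := m.2; omega⟩
def i1 (d : ℕ) (m : Fin (d-1)) : Fin d := ⟨m.1+1, by have := m.2; omega⟩

variable (d : ℕ) (V U : ℝ → ℝ)

/-- potential part of the Hamiltonian -/
def W (z : Fin d → ℝ) : ℝ :=
  (∑ i : Fin d, V (z i)) + ∑ m : Fin (d-1), U (z (i1 d m) - z (i0 d m))

lemma ham_split (x : E d) :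
    ham d V U x = (∑ i : Fin d, (x.2 i) ^ 2 / 2) + W d V U x.1 := by
  simp only [ham, W, Finset.sum_add_distrib]
  rw [add_assoc]
  rfl

/-- derivative of W -/
def Wd (z : Fin d → ℝ) : (Fin d → ℝ) →L[ℝ] ℝ :=
  (∑ i : Fin d, deriv V (z i) • pr d i) +
   ∑ m : Fin (d-1), deriv U (z (i1 d m) - z (i0 d m)) • (pr d (i1 d m) - pr d (i0 d m))

variable (hV : ContDiff ℝ (⊤:ℕ∞) V) (hU : ContDiff ℝ (⊤:ℕ∞) U)

section
include hV hU

lemma hasFDerivAt_W (z : Fin d → ℝ) : HasFDerivAt (W d V U) (Wd d V U z) z := by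
  apply HasFDerivAt.add
  · exact HasFDerivAt.fun_sum fun i _ =>
      ((hV.differentiable (zero_lt_one.trans_le le1).ne' (z i)).hasDerivAt).comp_hasFDerivAt z (pr d i).hasFDerivAt
  · exact HasFDerivAt.fun_sum fun m _ =>
      ((hU.differentiable (zero_lt_one.trans_le le1).ne' _).hasDerivAt).comp_hasFDerivAt z
        ((pr d (i1 d m)).hasFDerivAt.sub (pr d (i0 d m)).hasFDerivAt)

lemma contDiff_W : ContDiff ℝ (⊤:ℕ∞) (W d V U) := by
  apply ContDiff.add
  · exact ContDiff.sum fun i _ => hV.comp (pr d i).contDiff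
  · exact ContDiff.sum fun m _ => hU.comp ((pr d (i1 d m)).contDiff.sub (pr d (i0 d m)).contDiff)

end

/-- gradient components of W -/
def dW (z : Fin d → ℝ) (i : Fin d) : ℝ := Wd d V U z (Pi.single i 1)

lemma Wd_apply (z v : Fin d → ℝ) :
    Wd d V U z v = (∑ i : Fin d, deriv V (z i) * v i) +
      ∑ m : Fin (d-1), deriv U (z (i1 d m) - z (i0 d m)) * (v (i1 d m) - v (i0 d m)) := by
  simp [Wd, ContinuousLinearMap.sum_apply, pr]

include hV hU in
lemma contDiff_dW : ContDiff ℝ (⊤:ℕ∞) (fun z => dW d V U z) := by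
  have h1 : (fun z => dW d V U z) = fun z i => fderiv ℝ (W d V U) z (Pi.single i 1) := by
    funext z i
    rw [(hasFDerivAt_W d V U hV hU z).fderiv]; rfl
  rw [h1]
  refine contDiff_pi.2 fun i => ?_
  exact ((contDiff_W d V U hV hU).fderiv_right leD).clm_apply contDiff_const

/-- derivative of z ↦ Wd z v -/
def L2 (z v : Fin d → ℝ) : (Fin d → ℝ) →L[ℝ] ℝ :=
  (∑ j : Fin d, v j • (deriv (deriv V) (z j) • pr d j)) +
   ∑ m : Fin (d-1), (v (i1 d m) - v (i0 d m)) •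
      (deriv (deriv U) (z (i1 d m) - z (i0 d m)) • (pr d (i1 d m) - pr d (i0 d m)))

include hV hU in
lemma hasFDerivAt_Wdv (v z : Fin d → ℝ) :
    HasFDerivAt (fun z => Wd d V U z v) (L2 d V U z v) z := by
  have hV' : ContDiff ℝ (⊤:ℕ∞) (deriv V) := (contDiff_infty_iff_deriv.1 hV).2
  have hU' : ContDiff ℝ (⊤:ℕ∞) (deriv U) := (contDiff_infty_iff_deriv.1 hU).2
  have h1 : (fun z => Wd d V U z v) = fun z =>
      (∑ i : Fin d, deriv V (z i) * v i) +
        ∑ m : Fin (d-1), deriv U (z (i1 d m) - z (i0 d m)) * (v (i1 d m) - v (i0 d m)) :=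
    funext fun z => Wd_apply d V U z v
  rw [h1]
  apply HasFDerivAt.add
  · exact HasFDerivAt.fun_sum fun j _ =>
      (((hV'.differentiable (zero_lt_one.trans_le le1).ne' _).hasDerivAt).comp_hasFDerivAt z
        (pr d j).hasFDerivAt).mul_const (v j)
  · exact HasFDerivAt.fun_sum fun m _ =>
      (((hU'.differentiable (zero_lt_one.trans_le le1).ne' _).hasDerivAt).comp_hasFDerivAt z
        ((pr d (i1 d m)).hasFDerivAt.sub (pr d (i0 d m)).hasFDerivAt)).mul_const _

lemma L2_apply (z v w : Fin d → ℝ) :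
    L2 d V U z v w = (∑ j : Fin d, v j * (deriv (deriv V) (z j) * w j)) +
      ∑ m : Fin (d-1), (v (i1 d m) - v (i0 d m)) *
        (deriv (deriv U) (z (i1 d m) - z (i0 d m)) * (w (i1 d m) - w (i0 d m))) := by
  simp [L2, ContinuousLinearMap.sum_apply, pr, smul_eq_mul, mul_sub]

lemma hess_zero (z : Fin d → ℝ) (i j : Fin d) (h : j.1 + 2 ≤ i.1) :
    L2 d V U z (Pi.single i 1) (Pi.single j 1) = 0 := by
  rw [L2_apply]
  rw [Finset.sum_eq_zero, Finset.sum_eq_zero, add_zero]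
  · intro m _
    have h1 : m.1 < d - 1 := m.2
    simp only [Pi.single_apply, i0, i1, Fin.ext_iff]
    split_ifs <;> first | ring1 | omega | (exfalso; omega) | simp_all
  · intro j' _
    simp only [Pi.single_apply, Fin.ext_iff]
    split_ifs <;> first | ring1 | omega | (exfalso; omega) | simp_all

lemma hess_offdiag (z : Fin d → ℝ) (i j : Fin d) (hij : j.1 + 1 = i.1) (hi : i.1 ≤ d - 1) :
    L2 d V U z (Pi.single i 1) (Pi.single j 1) = -(deriv (deriv U) (z i - z j)) := by
  rw [L2_apply]
  rw [Finset.sum_eq_zero, zero_add]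
  · rw [Finset.sum_eq_single (⟨j.1, by omega⟩ : Fin (d-1))]
    · have e1 : i1 d (⟨j.1, by omega⟩ : Fin (d-1)) = i := Fin.ext (by simp [i1]; omega)
      have e2 : i0 d (⟨j.1, by omega⟩ : Fin (d-1)) = j := Fin.ext (by simp [i0])
      rw [e1, e2]
      rw [Pi.single_eq_same, Pi.single_eq_same,
        Pi.single_eq_of_ne (show j ≠ i from fun hc => by rw [Fin.ext_iff] at hc; omega),
        Pi.single_eq_of_ne (show i ≠ j from fun hc => by rw [Fin.ext_iff] at hc; omega)]
      ring
    · intro m _ hm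
      have h1 : m.1 < d - 1 := m.2
      have h2 : m.1 ≠ j.1 := fun hc => hm (Fin.ext hc)
      simp only [Pi.single_apply, i0, i1, Fin.ext_iff]
      split_ifs <;> first | ring1 | (exfalso; omega)
    · intro hc; exact absurd (Finset.mem_univ _) hc
  · intro j' _
    simp only [Pi.single_apply, Fin.ext_iff]
    split_ifs <;> first | ring1 | (exfalso; omega)

/-- kinetic energy -/
def K (z : Fin d → ℝ) : ℝ := ∑ i : Fin d, (z i)^2/2

def Kd (u : Fin d → ℝ) : (Fin d → ℝ) →L[ℝ] ℝ := ∑ i : Fin d, u i • pr d i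

lemma hasFDerivAt_K (u : Fin d → ℝ) : HasFDerivAt (K d) (Kd d u) u := by
  apply HasFDerivAt.fun_sum
  intro i _
  have h : HasDerivAt (fun t : ℝ => t^2/2) (u i) (u i) := by
    have := (hasDerivAt_pow 2 (u i)).div_const 2
    norm_num at this
    simpa using this
  exact h.comp_hasFDerivAt u (pr d i).hasFDerivAt

include hV hU in
lemma fderiv_ham_ez (x : E d) (i : Fin d) :
    fderiv ℝ (ham d V U) x (ez d i) = dW d V U x.1 i := by
  have hsplit : ham d V U = fun x : E d => K d x.2 + W d V U x.1 := by
    funext x; rw [ham_split]; rfl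
  have h : HasFDerivAt (ham d V U)
      (((Kd d x.2).comp (ContinuousLinearMap.snd ℝ (Fin d → ℝ) (Fin d → ℝ))) +
        ((Wd d V U x.1).comp (ContinuousLinearMap.fst ℝ (Fin d → ℝ) (Fin d → ℝ)))) x := by
    rw [hsplit]
    exact ((hasFDerivAt_K d x.2).comp x (hasFDerivAt_snd)).add
      ((hasFDerivAt_W d V U hV hU x.1).comp x (hasFDerivAt_fst))
  rw [h.fderiv]
  simp [ez, dW, Kd, ContinuousLinearMap.sum_apply]

/-- closed form of the drift -/
def bb (γ₁ γd : ℝ) (x : E d) : E d :=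
  (x.2, fun i => -(dW d V U x.1 i) -
    (if i.1 = 0 then γ₁ * x.2 i else 0) - (if i.1 = d - 1 then γd * x.2 i else 0))

include hV hU in
lemma drift_eq (γ₁ γd : ℝ) : drift d γ₁ γd V U = bb d V U γ₁ γd := by
  funext x
  unfold drift bb
  congr 1
  funext i
  rw [fderiv_ham_ez d V U hV hU]

variable (γ₁ γd : ℝ)

/-- derivative of bb -/
def DB (x : E d) : E d →L[ℝ] E d :=
  (ContinuousLinearMap.snd ℝ (Fin d → ℝ) (Fin d → ℝ)).prod
    (ContinuousLinearMap.pi fun i =>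
      -((L2 d V U x.1 (Pi.single i 1)).comp
          (ContinuousLinearMap.fst ℝ (Fin d → ℝ) (Fin d → ℝ)))
       - (if i.1 = 0 then γ₁ else 0) •
          ((pr d i).comp (ContinuousLinearMap.snd ℝ (Fin d → ℝ) (Fin d → ℝ)))
       - (if i.1 = d-1 then γd else 0) •
          ((pr d i).comp (ContinuousLinearMap.snd ℝ (Fin d → ℝ) (Fin d → ℝ))))

include hV hU in
lemma hasFDerivAt_bb (x : E d) :
    HasFDerivAt (bb d V U γ₁ γd) (DB d V U γ₁ γd x) x := by
  apply HasFDerivAt.prodMk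
  · exact hasFDerivAt_snd
  · refine hasFDerivAt_pi'.2 fun i => ?_
    rw [ContinuousLinearMap.proj_pi]
    have hA : HasFDerivAt (fun y : E d => dW d V U y.1 i)
        ((L2 d V U x.1 (Pi.single i 1)).comp (ContinuousLinearMap.fst ℝ (Fin d → ℝ) (Fin d → ℝ))) x :=
      (hasFDerivAt_Wdv d V U hV hU (Pi.single i 1) x.1).comp x hasFDerivAt_fst
    have hB : HasFDerivAt (fun y : E d => if i.1 = 0 then γ₁ * y.2 i else 0)
        ((if i.1 = 0 then γ₁ else 0) • ((pr d i).comp (ContinuousLinearMap.snd ℝ (Fin d → ℝ) (Fin d → ℝ)))) x := by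
      by_cases h : i.1 = 0 <;> simp only [h, if_true, if_false, ite_true, ite_false]
      · exact ((pr d i).comp (ContinuousLinearMap.snd ℝ (Fin d → ℝ) (Fin d → ℝ))).hasFDerivAt.const_mul γ₁
      · rw [zero_smul]; exact hasFDerivAt_const 0 x
    have hC : HasFDerivAt (fun y : E d => if i.1 = d - 1 then γd * y.2 i else 0)
        ((if i.1 = d-1 then γd else 0) • ((pr d i).comp (ContinuousLinearMap.snd ℝ (Fin d → ℝ) (Fin d → ℝ)))) x := by
      by_cases h : i.1 = d - 1 <;> simp only [h, if_true, if_false, ite_true, ite_false]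
      · exact ((pr d i).comp (ContinuousLinearMap.snd ℝ (Fin d → ℝ) (Fin d → ℝ))).hasFDerivAt.const_mul γd
      · rw [zero_smul]; exact hasFDerivAt_const 0 x
    exact (hA.neg.sub hB).sub hC

include hV hU in
lemma contDiff_bb : ContDiff ℝ (⊤:ℕ∞) (bb d V U γ₁ γd) := by
  apply ContDiff.prodMk
  · exact contDiff_snd
  · refine contDiff_pi.2 fun i => ?_
    refine ContDiff.sub (ContDiff.sub ?_ ?_) ?_
    · exact (contDiff_pi.1 ((contDiff_dW d V U hV hU).comp contDiff_fst) i).neg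
    · by_cases h : i.1 = 0 <;> simp only [h, if_true, if_false, ite_true, ite_false]
      · exact contDiff_const.mul ((pr d i).comp (ContinuousLinearMap.snd ℝ (Fin d → ℝ) (Fin d → ℝ))).contDiff
      · exact contDiff_const
    · by_cases h : i.1 = d - 1 <;> simp only [h, if_true, if_false, ite_true, ite_false]
      · exact contDiff_const.mul ((pr d i).comp (ContinuousLinearMap.snd ℝ (Fin d → ℝ) (Fin d → ℝ))).contDiff
      · exact contDiff_const

include hV hU in
lemma lie_coeff (α β : E d → Fin d → ℝ)
    (hα : ContDiff ℝ (⊤:ℕ∞) α) (hβ : ContDiff ℝ (⊤:ℕ∞) β) (x : E d) :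
    lie d (fun y => (α y, β y)) (bb d V U γ₁ γd) x =
      (fun i => β x i - fderiv ℝ (fun y => α y i) x (bb d V U γ₁ γd x),
       fun i => (-(L2 d V U x.1 (Pi.single i 1) (α x))
          - (if i.1 = 0 then γ₁ * β x i else 0)
          - (if i.1 = d - 1 then γd * β x i else 0))
          - fderiv ℝ (fun y => β y i) x (bb d V U γ₁ γd x)) := by
  unfold lie
  have hY : HasFDerivAt (fun y => (α y, β y))
      ((ContinuousLinearMap.pi fun i => fderiv ℝ (fun y => α y i) x).prod
        (ContinuousLinearMap.pi fun i => fderiv ℝ (fun y => β y i) x)) x := by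
    refine HasFDerivAt.prodMk ?_ ?_
    · refine hasFDerivAt_pi'.2 fun i => ?_
      rw [ContinuousLinearMap.proj_pi]
      exact (((contDiff_pi.1 hα i).differentiable (zero_lt_one.trans_le le1).ne') x).hasFDerivAt
    · refine hasFDerivAt_pi'.2 fun i => ?_
      rw [ContinuousLinearMap.proj_pi]
      exact (((contDiff_pi.1 hβ i).differentiable (zero_lt_one.trans_le le1).ne') x).hasFDerivAt
  rw [hY.fderiv, (hasFDerivAt_bb d V U hV hU γ₁ γd x).fderiv]
  refine Prod.ext ?_ ?_ <;> funext i <;>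
    simp [DB, Prod.fst_sub, Prod.snd_sub, Pi.sub_apply,
      ContinuousLinearMap.prod_apply, ContinuousLinearMap.pi_apply,
      ContinuousLinearMap.coe_sub', ContinuousLinearMap.comp_apply,
      ContinuousLinearMap.neg_apply, ContinuousLinearMap.smul_apply,
      ContinuousLinearMap.coe_fst', ContinuousLinearMap.coe_snd',
      pr, smul_eq_mul, ite_mul, zero_mul, sub_sub] <;>
    split_ifs <;> simp

lemma pi_expand (w : Fin d → ℝ) : w = ∑ j : Fin d, w j • (Pi.single j 1 : Fin d → ℝ) := by
  have h : ∑ j : Fin d, w j • (Pi.single j 1 : Fin d → ℝ) = ∑ j : Fin d, Pi.single j (w j) :=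
    Finset.sum_congr rfl fun j _ => by rw [← Pi.single_smul, smul_eq_mul, mul_one]
  rw [h, Finset.univ_sum_single]

lemma L2_expand (z v w : Fin d → ℝ) :
    L2 d V U z v w = ∑ j : Fin d, w j * L2 d V U z v (Pi.single j 1) := by
  conv_lhs => rw [pi_expand d w]
  rw [map_sum]
  exact Finset.sum_congr rfl fun j _ => by rw [map_smul, smul_eq_mul]

lemma fderiv_zero_fn (f : E d → ℝ) (hf : ∀ y, f y = 0) (y : E d) (w : E d) :
    fderiv ℝ f y w = 0 := by
  rw [show f = fun _ => (0:ℝ) from funext hf]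
  simp

def GoodEven (k : ℕ) (Y : E d → E d) : Prop :=
  ∃ α β : E d → Fin d → ℝ,
    ContDiff ℝ (⊤:ℕ∞) α ∧ ContDiff ℝ (⊤:ℕ∞) β ∧
    Y = (fun y => (α y, β y)) ∧
    (∀ y (i : Fin d), k ≤ i.1 → α y i = 0) ∧
    (∀ y (i : Fin d), k < i.1 → β y i = 0) ∧
    (∀ y (i : Fin d), i.1 = k → 0 < β y i)

def GoodOdd (k : ℕ) (Y : E d → E d) : Prop :=
  ∃ α β : E d → Fin d → ℝ,
    ContDiff ℝ (⊤:ℕ∞) α ∧ ContDiff ℝ (⊤:ℕ∞) β ∧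
    Y = (fun y => (α y, β y)) ∧
    (∀ y (i : Fin d), k < i.1 → α y i = 0) ∧
    (∀ y (i : Fin d), k < i.1 → β y i = 0) ∧
    (∀ y (i : Fin d), i.1 = k → 0 < α y i)

include hV hU in
lemma smooth_fderiv_coeff (α : E d → Fin d → ℝ) (hα : ContDiff ℝ (⊤:ℕ∞) α) (i : Fin d) :
    ContDiff ℝ (⊤:ℕ∞) (fun y => fderiv ℝ (fun y' => α y' i) y (bb d V U γ₁ γd y)) :=
  ((contDiff_pi.1 hα i).fderiv_right leD).clm_apply (contDiff_bb d V U hV hU γ₁ γd)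

include hV hU in
lemma smooth_L2_coeff (α : E d → Fin d → ℝ) (hα : ContDiff ℝ (⊤:ℕ∞) α) (i : Fin d) :
    ContDiff ℝ (⊤:ℕ∞) (fun y : E d => L2 d V U y.1 (Pi.single i 1) (α y)) := by
  have he : (fun z => L2 d V U z (Pi.single i 1)) =
      fun z => fderiv ℝ (fun z' => dW d V U z' i) z := by
    funext z
    exact ((hasFDerivAt_Wdv d V U hV hU (Pi.single i 1) z).fderiv).symm
  have h : ContDiff ℝ (⊤:ℕ∞) (fun z => L2 d V U z (Pi.single i 1)) := by
    rw [he]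
    exact (contDiff_pi.1 (contDiff_dW d V U hV hU) i).fderiv_right leD
  exact (h.comp contDiff_fst).clm_apply hα

include hV hU in
lemma smooth_beta' (α β : E d → Fin d → ℝ) (hα : ContDiff ℝ (⊤:ℕ∞) α)
    (hβ : ContDiff ℝ (⊤:ℕ∞) β) :
    ContDiff ℝ (⊤:ℕ∞) (fun y => fun i =>
      (-(L2 d V U y.1 (Pi.single i 1) (α y))
        - (if i.1 = 0 then γ₁ * β y i else 0)
        - (if i.1 = d - 1 then γd * β y i else 0))
        - fderiv ℝ (fun y' => β y' i) y (bb d V U γ₁ γd y)) := by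
  refine contDiff_pi.2 fun i => ?_
  refine ContDiff.sub (ContDiff.sub (ContDiff.sub ?_ ?_) ?_) ?_
  · exact (smooth_L2_coeff d V U hV hU α hα i).neg
  · by_cases h : i.1 = 0 <;> simp only [h, if_true, if_false, ite_true, ite_false]
    · exact contDiff_const.mul (contDiff_pi.1 hβ i)
    · exact contDiff_const
  · by_cases h : i.1 = d - 1 <;> simp only [h, if_true, if_false, ite_true, ite_false]
    · exact contDiff_const.mul (contDiff_pi.1 hβ i)
    · exact contDiff_const
  · exact smooth_fderiv_coeff d V U hV hU γ₁ γd β hβ i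

include hV hU in
lemma smooth_alpha' (α β : E d → Fin d → ℝ) (hα : ContDiff ℝ (⊤:ℕ∞) α)
    (hβ : ContDiff ℝ (⊤:ℕ∞) β) :
    ContDiff ℝ (⊤:ℕ∞) (fun y => fun i =>
      β y i - fderiv ℝ (fun y' => α y' i) y (bb d V U γ₁ γd y)) := by
  refine contDiff_pi.2 fun i => ?_
  exact (contDiff_pi.1 hβ i).sub (smooth_fderiv_coeff d V U hV hU γ₁ γd α hα i)

include hV hU in
lemma stepEO (k : ℕ) (Y : E d → E d) (h : GoodEven d k Y) :
    GoodOdd d k (lie d Y (bb d V U γ₁ γd)) := by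
  obtain ⟨α, β, hα, hβ, hYe, hα0, hβ0, hβpos⟩ := h
  refine ⟨fun y => fun i => β y i - fderiv ℝ (fun y' => α y' i) y (bb d V U γ₁ γd y),
    fun y => fun i =>
      (-(L2 d V U y.1 (Pi.single i 1) (α y))
        - (if i.1 = 0 then γ₁ * β y i else 0)
        - (if i.1 = d - 1 then γd * β y i else 0))
        - fderiv ℝ (fun y' => β y' i) y (bb d V U γ₁ γd y),
    smooth_alpha' d V U hV hU γ₁ γd α β hα hβ,
    smooth_beta' d V U hV hU γ₁ γd α β hα hβ, ?_, ?_, ?_, ?_⟩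
  · funext y
    rw [hYe]
    exact lie_coeff d V U hV hU γ₁ γd α β hα hβ y
  · intro y i hi
    dsimp only
    rw [hβ0 y i hi, fderiv_zero_fn d (fun y' => α y' i) (fun y' => hα0 y' i hi.le) y, sub_zero]
  · intro y i hi
    dsimp only
    rw [fderiv_zero_fn d (fun y' => β y' i) (fun y' => hβ0 y' i hi) y, sub_zero]
    rw [hβ0 y i hi]
    have hL : L2 d V U y.1 (Pi.single i 1) (α y) = 0 := by
      rw [L2_expand]
      refine Finset.sum_eq_zero fun j _ => ?_
      by_cases hj : k ≤ j.1
      · rw [hα0 y j hj, zero_mul]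
      · rw [hess_zero d V U y.1 i j (by omega), mul_zero]
    rw [hL]
    simp
  · intro y i hi
    dsimp only
    rw [fderiv_zero_fn d (fun y' => α y' i) (fun y' => hα0 y' i hi.ge) y, sub_zero]
    exact hβpos y i hi

include hV hU in
lemma stepOE (k : ℕ) (hk : k + 1 ≤ d - 1) (hU'' : ∀ s : ℝ, 0 < deriv (deriv U) s)
    (Y : E d → E d) (h : GoodOdd d k Y) :
    GoodEven d (k+1) (lie d Y (bb d V U γ₁ γd)) := by
  obtain ⟨α, β, hα, hβ, hYe, hα0, hβ0, hαpos⟩ := h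
  refine ⟨fun y => fun i => β y i - fderiv ℝ (fun y' => α y' i) y (bb d V U γ₁ γd y),
    fun y => fun i =>
      (-(L2 d V U y.1 (Pi.single i 1) (α y))
        - (if i.1 = 0 then γ₁ * β y i else 0)
        - (if i.1 = d - 1 then γd * β y i else 0))
        - fderiv ℝ (fun y' => β y' i) y (bb d V U γ₁ γd y),
    smooth_alpha' d V U hV hU γ₁ γd α β hα hβ,
    smooth_beta' d V U hV hU γ₁ γd α β hα hβ, ?_, ?_, ?_, ?_⟩
  · funext y
    rw [hYe]
    exact lie_coeff d V U hV hU γ₁ γd α β hα hβ y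
  · intro y i hi
    dsimp only
    rw [hβ0 y i (by omega), fderiv_zero_fn d (fun y' => α y' i) (fun y' => hα0 y' i (by omega)) y,
      sub_zero]
  · intro y i hi
    dsimp only
    rw [fderiv_zero_fn d (fun y' => β y' i) (fun y' => hβ0 y' i (by omega)) y, sub_zero]
    rw [hβ0 y i (by omega)]
    have hL : L2 d V U y.1 (Pi.single i 1) (α y) = 0 := by
      rw [L2_expand]
      refine Finset.sum_eq_zero fun j _ => ?_
      by_cases hj : k < j.1
      · rw [hα0 y j hj, zero_mul]
      · rw [hess_zero d V U y.1 i j (by omega), mul_zero]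
    rw [hL]
    simp
  · intro y i hi
    dsimp only
    rw [fderiv_zero_fn d (fun y' => β y' i) (fun y' => hβ0 y' i (by omega)) y, sub_zero]
    rw [hβ0 y i (by omega)]
    have hL : L2 d V U y.1 (Pi.single i 1) (α y)
        = α y ⟨k, by omega⟩ * -(deriv (deriv U) (y.1 i - y.1 ⟨k, by omega⟩)) := by
      rw [L2_expand]
      rw [Finset.sum_eq_single (⟨k, by omega⟩ : Fin d)]
      · rw [hess_offdiag d V U y.1 i ⟨k, by omega⟩ (show k + 1 = i.1 by omega) (by omega)]
      · intro j _ hj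
        by_cases hjk : k < j.1
        · rw [hα0 y j hjk, zero_mul]
        · have hlt : j.1 < k := by
            have hne : j.1 ≠ k := fun hc => hj (Fin.ext hc)
            omega
          rw [hess_zero d V U y.1 i j (by omega), mul_zero]
      · intro hc; exact absurd (Finset.mem_univ _) hc
    rw [hL]
    have h1 : 0 < α y ⟨k, by omega⟩ := hαpos y _ rfl
    have h2 : 0 < deriv (deriv U) (y.1 i - y.1 ⟨k, by omega⟩) := hU'' _
    simpa only [mul_zero, ite_self, sub_zero, mul_neg, neg_neg] using mul_pos h1 h2

lemma pos3 (hd : 3 ≤ d) : 0 < d := by omega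

lemma lt3 (hd : 3 ≤ d) : d - 1 < d := by omega

include hV hU in
lemma chain (hd : 3 ≤ d) (hU'' : ∀ s : ℝ, 0 < deriv (deriv U) s) :
    ∀ k, k ≤ d - 2 →
      GoodEven d k (UU d (bb d V U γ₁ γd) (eu d ⟨0, pos3 d hd⟩) (2*k)) ∧
      GoodOdd d k (UU d (bb d V U γ₁ γd) (eu d ⟨0, pos3 d hd⟩) (2*k+1)) := by
  have base : GoodEven d 0 (UU d (bb d V U γ₁ γd) (eu d ⟨0, pos3 d hd⟩) 0) := by
    refine ⟨fun _ => 0, fun _ => Pi.single ⟨0, pos3 d hd⟩ 1, contDiff_const, contDiff_const,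
      ?_, ?_, ?_, ?_⟩
    · funext y; rfl
    · intro y i _; rfl
    · intro y i hi
      exact Pi.single_eq_of_ne (fun hc => by rw [hc] at hi; simp at hi) 1
    · intro y i hi
      have : i = ⟨0, pos3 d hd⟩ := Fin.ext hi
      dsimp only
      rw [this]; simp
  intro k
  induction k with
  | zero =>
    intro _
    exact ⟨base, stepEO d V U hV hU γ₁ γd 0 _ base⟩
  | succ k ih =>
    intro hk
    have h1 := ih (by omega)
    have he : GoodEven d (k+1)
        (UU d (bb d V U γ₁ γd) (eu d ⟨0, pos3 d hd⟩) (2*(k+1))) :=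
      stepOE d V U hV hU γ₁ γd k (by omega) hU'' _ h1.2
    exact ⟨he, stepEO d V U hV hU γ₁ γd (k+1) _ he⟩

include hV hU in
lemma lie_const_val (hd : 3 ≤ d) (x : E d) :
    lie d (fun _ => eu d ⟨d-1, lt3 d hd⟩) (bb d V U γ₁ γd) x
      = ez d ⟨d-1, lt3 d hd⟩ - γd • eu d ⟨d-1, lt3 d hd⟩ := by
  unfold lie
  rw [(hasFDerivAt_bb d V U hV hU γ₁ γd x).fderiv]
  rw [fderiv_fun_const]
  refine Prod.ext ?_ ?_
  · simp [DB, ez, eu]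
  · funext i
    simp only [DB, ez, eu, Prod.snd_sub, Prod.smul_snd, Pi.sub_apply, Pi.smul_apply,
      ContinuousLinearMap.prod_apply, ContinuousLinearMap.pi_apply,
      ContinuousLinearMap.coe_sub', ContinuousLinearMap.comp_apply,
      ContinuousLinearMap.neg_apply, ContinuousLinearMap.smul_apply,
      ContinuousLinearMap.coe_fst', ContinuousLinearMap.coe_snd',
      ContinuousLinearMap.zero_apply, pr, ContinuousLinearMap.proj_apply,
      map_zero, neg_zero, smul_eq_mul, Pi.zero_apply, zero_sub]
    simp only [Prod.snd_zero, Pi.zero_apply, sub_zero]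
    split_ifs <;> simp_all [Fin.ext_iff] <;> omega

lemma mem_span_basis (M : Submodule ℝ (E d)) (w : E d)
    (h1 : ∀ i, w.1 i ≠ 0 → ez d i ∈ M) (h2 : ∀ i, w.2 i ≠ 0 → eu d i ∈ M) : w ∈ M := by
  have hw : w = (∑ i : Fin d, w.1 i • ez d i) + ∑ i : Fin d, w.2 i • eu d i := by
    refine Prod.ext ?_ ?_ <;>
      simp only [Prod.fst_add, Prod.snd_add, Prod.fst_sum, Prod.snd_sum,
        Prod.smul_fst, Prod.smul_snd, ez, eu, smul_zero, Finset.sum_const_zero,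
        add_zero, zero_add]
    · exact pi_expand d w.1
    · exact pi_expand d w.2
  rw [hw]
  refine add_mem (Submodule.sum_mem _ fun i _ => ?_) (Submodule.sum_mem _ fun i _ => ?_)
  · by_cases h : w.1 i = 0
    · rw [h, zero_smul]; exact zero_mem _
    · exact Submodule.smul_mem _ _ (h1 i h)
  · by_cases h : w.2 i = 0
    · rw [h, zero_smul]; exact zero_mem _
    · exact Submodule.smul_mem _ _ (h2 i h)

end S16

theorem stmt16 (d : ℕ) (hd : 3 ≤ d) (γ₁ γd : ℝ) (V U : ℝ → ℝ)
    (hV : ContDiff ℝ (⊤ : ℕ∞) V) (hU : ContDiff ℝ (⊤ : ℕ∞) U)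
    (hU'' : ∀ s : ℝ, 0 < deriv (deriv U) s) :
    ∀ x : E d,
      Submodule.span ℝ
          ((Set.range fun n : Fin (2 * d - 2) =>
              UU d (drift d γ₁ γd V U) (eu d ⟨0, by omega⟩) n.1 x) ∪
            {eu d ⟨d - 1, by omega⟩,
              lie d (fun _ => eu d ⟨d - 1, by omega⟩) (drift d γ₁ γd V U) x}) = ⊤ ∧
      ∀ i : Fin d,
        ez d i ∈
          Submodule.span ℝ
            ((Set.range fun n : Fin (2 * d - 2) =>
                UU d (drift d γ₁ γd V U) (eu d ⟨0, by omega⟩) n.1 x) ∪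
              {eu d ⟨d - 1, by omega⟩,
                lie d (fun _ => eu d ⟨d - 1, by omega⟩) (drift d γ₁ γd V U) x}) ∧
        eu d i ∈
          Submodule.span ℝ
            ((Set.range fun n : Fin (2 * d - 2) =>
                UU d (drift d γ₁ γd V U) (eu d ⟨0, by omega⟩) n.1 x) ∪
              {eu d ⟨d - 1, by omega⟩,
                lie d (fun _ => eu d ⟨d - 1, by omega⟩) (drift d γ₁ γd V U) x}) := by
  intro x
  rw [S16.drift_eq d V U hV hU γ₁ γd]
  have h0 : 0 < d := by omega
  have hd1 : d - 1 < d := by omega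
  have main : ∀ M : Submodule ℝ (E d),
      (∀ n : ℕ, n < 2*d-2 → UU d (S16.bb d V U γ₁ γd) (eu d ⟨0, h0⟩) n x ∈ M) →
      eu d ⟨d-1, hd1⟩ ∈ M →
      (lie d (fun _ => eu d ⟨d-1, hd1⟩) (S16.bb d V U γ₁ γd) x) ∈ M →
      ∀ i : Fin d, ez d i ∈ M ∧ eu d i ∈ M := by
    intro M hUm heu hlie
    have hezlast : ez d ⟨d-1, hd1⟩ ∈ M := by
      have h := S16.lie_const_val d V U hV hU γ₁ γd hd x
      have h2 : ez d ⟨d-1, hd1⟩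
          = lie d (fun _ => eu d ⟨d-1, hd1⟩) (S16.bb d V U γ₁ γd) x
            + γd • eu d ⟨d-1, hd1⟩ := by
        rw [h, sub_add_cancel]
      rw [h2]; exact add_mem hlie (M.smul_mem _ heu)
    have core : ∀ k, k ≤ d - 2 →
        (∀ j : Fin d, j.1 < k → ez d j ∈ M ∧ eu d j ∈ M) →
        ∀ j : Fin d, j.1 = k → ez d j ∈ M ∧ eu d j ∈ M := by
      intro k hk prev j hj
      obtain ⟨α, β, hα, hβ, hYe, hα0, hβ0, hβpos⟩ :=
        (S16.chain d V U hV hU γ₁ γd hd hU'' k hk).1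
      have hvmem : UU d (S16.bb d V U γ₁ γd) (eu d ⟨0, h0⟩) (2*k) x ∈ M :=
        hUm (2*k) (by omega)
      have hval : UU d (S16.bb d V U γ₁ γd) (eu d ⟨0, h0⟩) (2*k) x = (α x, β x) := by
        rw [hYe]
      have heuj : eu d j ∈ M := by
        have hwmem : ((fun i => α x i, fun i => β x i - β x j * (Pi.single j 1 : Fin d → ℝ) i) : E d) ∈ M := by
          apply S16.mem_span_basis
          · intro i hi
            dsimp at hi
            have hik : i.1 < k := by
              by_contra hcon
              exact hi (hα0 x i (by omega))
            exact (prev i hik).1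
          · intro i hi
            dsimp at hi
            have hij : i ≠ j := by
              intro hc; subst hc
              rw [Pi.single_eq_same, mul_one, sub_self] at hi
              exact hi rfl
            rw [Pi.single_eq_of_ne hij, mul_zero, sub_zero] at hi
            have hik : i.1 < k := by
              have h1 : ¬ k < i.1 := fun hcon => hi (hβ0 x i hcon)
              have h2 : i.1 ≠ k := fun hc => hij (Fin.ext (by omega))
              omega
            exact (prev i hik).2
        have hsm : β x j • eu d j ∈ M := by
          have heq : β x j • eu d j
              = UU d (S16.bb d V U γ₁ γd) (eu d ⟨0, h0⟩) (2*k) x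
                - ((fun i => α x i, fun i => β x i - β x j * (Pi.single j 1 : Fin d → ℝ) i) : E d) := by
            rw [hval]
            refine Prod.ext ?_ ?_ <;> funext i <;> simp [eu] <;> ring
          rw [heq]; exact sub_mem hvmem hwmem
        have hβj : 0 < β x j := hβpos x j hj
        have hfin := M.smul_mem (β x j)⁻¹ hsm
        rwa [inv_smul_smul₀ (ne_of_gt hβj)] at hfin
      obtain ⟨α', β', hα', hβ', hYe', hα0', hβ0', hαpos'⟩ :=
        (S16.chain d V U hV hU γ₁ γd hd hU'' k hk).2
      have hvmem' : UU d (S16.bb d V U γ₁ γd) (eu d ⟨0, h0⟩) (2*k+1) x ∈ M :=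
        hUm (2*k+1) (by omega)
      have hval' : UU d (S16.bb d V U γ₁ γd) (eu d ⟨0, h0⟩) (2*k+1) x = (α' x, β' x) := by
        rw [hYe']
      have hezj : ez d j ∈ M := by
        have hwmem : ((fun i => α' x i - α' x j * (Pi.single j 1 : Fin d → ℝ) i, fun i => β' x i) : E d) ∈ M := by
          apply S16.mem_span_basis
          · intro i hi
            dsimp at hi
            have hij : i ≠ j := by
              intro hc; subst hc
              rw [Pi.single_eq_same, mul_one, sub_self] at hi
              exact hi rfl
            rw [Pi.single_eq_of_ne hij, mul_zero, sub_zero] at hi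
            have hik : i.1 < k := by
              have h1 : ¬ k < i.1 := fun hcon => hi (hα0' x i hcon)
              have h2 : i.1 ≠ k := fun hc => hij (Fin.ext (by omega))
              omega
            exact (prev i hik).1
          · intro i hi
            dsimp at hi
            by_cases hik : i.1 < k
            · exact (prev i hik).2
            · have h1 : ¬ k < i.1 := fun hcon => hi (hβ0' x i hcon)
              have h2 : i = j := Fin.ext (by omega)
              rw [h2]; exact heuj
        have hsm : α' x j • ez d j ∈ M := by
          have heq : α' x j • ez d j
              = UU d (S16.bb d V U γ₁ γd) (eu d ⟨0, h0⟩) (2*k+1) x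
                - ((fun i => α' x i - α' x j * (Pi.single j 1 : Fin d → ℝ) i, fun i => β' x i) : E d) := by
            rw [hval']
            refine Prod.ext ?_ ?_ <;> funext i <;> simp [ez] <;> ring
          rw [heq]; exact sub_mem hvmem' hwmem
        have hfin := M.smul_mem (α' x j)⁻¹ hsm
        rwa [inv_smul_smul₀ (ne_of_gt (hαpos' x j hj))] at hfin
      exact ⟨hezj, heuj⟩
    have step : ∀ k, k ≤ d-2 → ∀ j : Fin d, j.1 ≤ k → ez d j ∈ M ∧ eu d j ∈ M := by
      intro k
      induction k with
      | zero =>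
        intro hk j hj
        exact core 0 hk (fun j' hj' => absurd hj' (Nat.not_lt_zero _)) j (Nat.le_zero.1 hj)
      | succ k ih =>
        intro hk j hj
        rcases Nat.lt_or_ge j.1 (k+1) with h' | h'
        · exact ih (by omega) j (by omega)
        · exact core (k+1) hk (fun j' hj' => ih (by omega) j' (by omega)) j (by omega)
    intro i
    by_cases hi : i.1 = d - 1
    · have hieq : i = ⟨d-1, hd1⟩ := Fin.ext hi
      rw [hieq]; exact ⟨hezlast, heu⟩
    · have hi2 : i.1 ≤ d - 2 := by have := i.2; omega
      exact step (d-2) le_rfl i hi2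
  have final : ∀ S : Set (E d),
      (∀ n : Fin (2*d-2), UU d (S16.bb d V U γ₁ γd) (eu d ⟨0, h0⟩) n.1 x ∈ S) →
      eu d ⟨d-1, hd1⟩ ∈ S →
      lie d (fun _ => eu d ⟨d-1, hd1⟩) (S16.bb d V U γ₁ γd) x ∈ S →
      Submodule.span ℝ S = ⊤ ∧
        ∀ i : Fin d, ez d i ∈ Submodule.span ℝ S ∧ eu d i ∈ Submodule.span ℝ S := by
    intro S hS1 hS2 hS3
    have h1 : ∀ n : ℕ, n < 2*d-2 →
        UU d (S16.bb d V U γ₁ γd) (eu d ⟨0, h0⟩) n x ∈ Submodule.span ℝ S :=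
      fun n hn => Submodule.subset_span (hS1 ⟨n, hn⟩)
    have h2 : eu d ⟨d-1, hd1⟩ ∈ Submodule.span ℝ S := Submodule.subset_span hS2
    have h3 : lie d (fun _ => eu d ⟨d-1, hd1⟩) (S16.bb d V U γ₁ γd) x ∈ Submodule.span ℝ S :=
      Submodule.subset_span hS3
    have hall := main (Submodule.span ℝ S) h1 h2 h3
    constructor
    · refine Submodule.eq_top_iff'.2 fun w => ?_
      apply S16.mem_span_basis
      · intro i _; exact (hall i).1
      · intro i _; exact (hall i).2
    · exact hall
  exact final _ (fun n => Set.mem_union_left _ ⟨n, rfl⟩)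
    (Set.mem_union_right _ (Set.mem_insert _ _))
    (Set.mem_union_right _ (Set.mem_insert_iff.2 (Or.inr rfl)))
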